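/- Let α ∈ (0,1) and β ∈ ℝ. Then for every θ > 0 and every x > 0: |ξ_{α,β}(x;θ)| ≤ (|sin(βπ)| / (π sin²(απ)) + |sin((α−β)π)| / (2π (1 + cos(απ)))) · x^{−β}. -/

import Mathlib

open Real

/-- The density `ξ_{α,β}(x;θ)` of the Bernstein measure of the fractional resolvent:
`ξ_{α,β}(x;θ) = (1/π) (x^{2α−β} sin(βπ) − θ x^{α−β} sin((α−β)π))
                / (θ² + 2θ cos(απ) x^α + x^{2α})`. -/
noncomputable def xiFrac (α β x θ : ℝ) : ℝ :=
  (1 / Real.pi) *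
    ((x ^ (2 * α - β) * Real.sin (β * Real.pi)
        - θ * x ^ (α - β) * Real.sin ((α - β) * Real.pi)) /
      (θ ^ 2 + 2 * θ * Real.cos (α * Real.pi) * x ^ α + x ^ (2 * α)))

/-- Let `α ∈ (0,1)` and `β ∈ ℝ`.  Then for every `θ > 0` and `x > 0`:
`|ξ_{α,β}(x;θ)| ≤ (|sin(βπ)|/(π sin²(απ)) + |sin((α−β)π)|/(2π(1+cos(απ)))) · x^{−β}`. -/
theorem xiFrac_bound_large_x
    (α β : ℝ) (hα : α ∈ Set.Ioo (0 : ℝ) 1)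
    (θ x : ℝ) (hθ : 0 < θ) (hx : 0 < x) :
    |xiFrac α β x θ| ≤
      (|Real.sin (β * Real.pi)| / (Real.pi * Real.sin (α * Real.pi) ^ 2)
          + |Real.sin ((α - β) * Real.pi)| / (2 * Real.pi * (1 + Real.cos (α * Real.pi)))) *
        x ^ (-β) := by
  obtain ⟨hα0, hα1⟩ := hα
  have hπ := Real.pi_pos
  have hspos : 0 < Real.sin (α * Real.pi) :=
    Real.sin_pos_of_pos_of_lt_pi (by positivity) (by nlinarith)
  have hc1 : -1 < Real.cos (α * Real.pi) := by
    nlinarith [Real.sin_sq_add_cos_sq (α * Real.pi)]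
  have hy : 0 < x ^ α := Real.rpow_pos_of_pos hx α
  have hz : 0 < x ^ (-β) := Real.rpow_pos_of_pos hx _
  set s := Real.sin (α * Real.pi) with hs
  set c := Real.cos (α * Real.pi) with hc
  set sb := Real.sin (β * Real.pi) with hsb
  set sab := Real.sin ((α - β) * Real.pi) with hsab
  set y := x ^ α with hyd
  set z := x ^ (-β) with hzd
  have hx2 : x ^ (2 * α) = y ^ 2 := by
    rw [two_mul, Real.rpow_add hx, sq]
  have hxa : x ^ (2 * α - β) = y ^ 2 * z := by
    rw [sub_eq_add_neg, Real.rpow_add hx, hx2]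
  have hxb : x ^ (α - β) = y * z := by
    rw [sub_eq_add_neg, Real.rpow_add hx]
  have h1c : (0:ℝ) < 1 + c := by linarith
  have h2c : (2 * (1 + c)) ≠ 0 := ne_of_gt (by linarith)
  have hD1 : s ^ 2 * y ^ 2 ≤ θ ^ 2 + 2 * θ * c * y + y ^ 2 := by
    nlinarith [sq_nonneg (θ + c * y), Real.sin_sq_add_cos_sq (α * Real.pi)]
  have hD2 : 2 * (1 + c) * θ * y ≤ θ ^ 2 + 2 * θ * c * y + y ^ 2 := by
    nlinarith [sq_nonneg (θ - y)]
  have hDpos : 0 < θ ^ 2 + 2 * θ * c * y + y ^ 2 := lt_of_lt_of_le (by positivity) hD1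
  set D := θ ^ 2 + 2 * θ * c * y + y ^ 2 with hDd
  have hx2' : xiFrac α β x θ = (1 / Real.pi) * ((y ^ 2 * z * sb - θ * (y * z) * sab) / D) := by
    rw [xiFrac, hxa, hxb, hx2]
  rw [hx2', abs_mul, abs_of_pos (by positivity : (0:ℝ) < 1 / Real.pi), abs_div, abs_of_pos hDpos]
  have hnum : |y ^ 2 * z * sb - θ * (y * z) * sab| ≤ y ^ 2 * z * |sb| + θ * (y * z) * |sab| := by
    calc |y ^ 2 * z * sb - θ * (y * z) * sab|
        ≤ |y ^ 2 * z * sb| + |θ * (y * z) * sab| := abs_sub _ _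
      _ = y ^ 2 * z * |sb| + θ * (y * z) * |sab| := by
          simp only [abs_mul, abs_pow, abs_of_pos hy, abs_of_pos hz, abs_of_pos hθ]
  have h1 : y ^ 2 * z * |sb| / D ≤ |sb| / s ^ 2 * z := by
    rw [div_le_iff₀ hDpos]
    calc y ^ 2 * z * |sb| = |sb| * z / s ^ 2 * (s ^ 2 * y ^ 2) := by
          field_simp
      _ ≤ |sb| * z / s ^ 2 * D := by
          apply mul_le_mul_of_nonneg_left hD1 (by positivity)
      _ = |sb| / s ^ 2 * z * D := by ring
  have h2 : θ * (y * z) * |sab| / D ≤ |sab| / (2 * (1 + c)) * z := by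
    rw [div_le_iff₀ hDpos]
    calc θ * (y * z) * |sab| = |sab| * z / (2 * (1 + c)) * (2 * (1 + c) * θ * y) := by
          field_simp [h2c]
      _ ≤ |sab| * z / (2 * (1 + c)) * D := by
          apply mul_le_mul_of_nonneg_left hD2
            (div_nonneg (by positivity) (by linarith))
      _ = |sab| / (2 * (1 + c)) * z * D := by ring
  calc 1 / Real.pi * (|y ^ 2 * z * sb - θ * (y * z) * sab| / D)
      ≤ 1 / Real.pi * ((y ^ 2 * z * |sb| + θ * (y * z) * |sab|) / D) := by
        gcongr
    _ = 1 / Real.pi * (y ^ 2 * z * |sb| / D + θ * (y * z) * |sab| / D) := by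
        rw [add_div]
    _ ≤ 1 / Real.pi * (|sb| / s ^ 2 * z + |sab| / (2 * (1 + c)) * z) := by
        gcongr
    _ = (|sb| / (Real.pi * s ^ 2) + |sab| / (2 * Real.pi * (1 + c))) * z := by
        field_simp [hπ.ne', hspos.ne', h2c]
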